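/- Let X be a finite set, Θ ⊆ ℝ^n open, and θ ↦ p_θ a continuously differentiable family of strictly positive probability distributions on X. Fix α > 0 and assume the n×n α-information matrix G^{(α)}(θ) is positive definite. Then for every A : X → ℝ and every θ ∈ Θ, Var_{p_θ^{(α)}}[(p_θ/p_θ^{(α)})(A − E_{p_θ}[A])] ≥ (∇_θ E_{p_θ}[A])^T (G^{(α)}(θ))^{-1} (∇_θ E_{p_θ}[A]). -/

import Mathlib

open scoped BigOperators Topology Matrix
open Real MeasureTheory

noncomputable section

/-- Expectation of `A` under the weight/distribution `p` on a finite set. -/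
def expct {X : Type*} [Fintype X] (p A : X → ℝ) : ℝ := ∑ x, p x * A x

/-- Covariance of `A` and `B` under `p`. -/
def covf {X : Type*} [Fintype X] (p A B : X → ℝ) : ℝ :=
  (∑ x, p x * A x * B x) - (∑ x, p x * A x) * (∑ x, p x * B x)

/-- Variance of `A` under `p`: `E_p[(A - E_p A)^2]`. -/
def varE {X : Type*} [Fintype X] (p A : X → ℝ) : ℝ :=
  ∑ x, p x * (A x - expct p A) ^ 2

/-- The α-escort distribution of `p`. -/
def escort {X : Type*} [Fintype X] (α : ℝ) (p : X → ℝ) : X → ℝ :=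
  fun x => p x ^ α / ∑ y, p y ^ α

/-- Partial derivative in the `i`-th coordinate direction. -/
def pderiv {m : ℕ} (i : Fin m) (f : (Fin m → ℝ) → ℝ) (θ : Fin m → ℝ) : ℝ :=
  fderiv ℝ f θ (Pi.single i 1)

/-- Covariance matrix of a vector-valued map `A` under `p`. -/
def covMatrix {X : Type*} [Fintype X] {m : ℕ} (p : X → ℝ) (A : X → Fin m → ℝ) :
    Matrix (Fin m) (Fin m) ℝ :=
  Matrix.of fun i j => covf p (fun x => A x i) (fun x => A x j)

/-- The α-information matrix `G^{(α)}(θ)`. -/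
def Galpha {X : Type*} [Fintype X] {m : ℕ} (α : ℝ) (p : (Fin m → ℝ) → X → ℝ)
    (θ : Fin m → ℝ) : Matrix (Fin m) (Fin m) ℝ :=
  Matrix.of fun i j =>
    covf (escort α (p θ)) (fun x => pderiv i (fun t => Real.log (p t x)) θ)
      (fun x => pderiv j (fun t => Real.log (p t x)) θ)

/-- The I_α-divergence (relative α-entropy). -/
def Ialpha {X : Type*} [Fintype X] (α : ℝ) (p q : X → ℝ) : ℝ :=
  (1 / (1 - α)) * Real.log (∑ x, p x * q x ^ (α - 1))
    + (1 / α) * Real.log (∑ x, q x ^ α)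
    - (1 / (α * (1 - α))) * Real.log (∑ x, p x ^ α)

/-- Generalized KL-divergence between positive measures on a finite set. -/
def genKL {X : Type*} [Fintype X] (pt qt : X → ℝ) : ℝ :=
  ∑ x, pt x * Real.log (pt x / qt x) - ∑ x, pt x + ∑ x, qt x

/-- The Fisher information matrix `G^{(e)}(θ)`. -/
def GeMat {X : Type*} [Fintype X] {k : ℕ} (p : (Fin k → ℝ) → X → ℝ) (θ : Fin k → ℝ) :
    Matrix (Fin k) (Fin k) ℝ :=
  Matrix.of fun i j =>
    ∑ x, p θ x * pderiv i (fun t => Real.log (p t x)) θ * pderiv j (fun t => Real.log (p t x)) θ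

/-- The prior matrix `J^λ(θ)` with entries `∂_i log λ · ∂_j log λ`. -/
def Jmat {k : ℕ} (lam : (Fin k → ℝ) → ℝ) (θ : Fin k → ℝ) : Matrix (Fin k) (Fin k) ℝ :=
  Matrix.of fun i j =>
    pderiv i (fun t => Real.log (lam t)) θ * pderiv j (fun t => Real.log (lam t)) θ

/-- The generalized Fisher matrix `G^{(f,F)}(θ)` of the escort model. -/
def GFF {X : Type*} [Fintype X] {k : ℕ} (F : ℝ → ℝ) (p : (Fin k → ℝ) → X → ℝ)
    (θ : Fin k → ℝ) : Matrix (Fin k) (Fin k) ℝ :=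
  Matrix.of fun i j =>
    ∑ x, F (p θ x) * pderiv i (fun t => Real.log (F (p t x))) θ
      * pderiv j (fun t => Real.log (F (p t x))) θ

/-- The generalized f-divergence `D_f^{(F)}(p,q)`. -/
def genDiv {X : Type*} [Fintype X] (f F : ℝ → ℝ) (p q : X → ℝ) : ℝ :=
  (1 / deriv (deriv f) 1) * ∑ x, F (q x) * f (F (p x) / F (q x))

/-- The Bayesian I_α-divergence between `λ·p` and `μ·q`. -/
def IalphaB {X : Type*} [Fintype X] (α lam mu : ℝ) (p q : X → ℝ) : ℝ :=
  lam * Ialpha α p q + lam * Real.log (lam / mu) - lam + mu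

/-- The open-simplex parametrization of distributions on a set with `d+1` points. -/
def simplexFam (d : ℕ) (θ : Fin d → ℝ) : Fin (d + 1) → ℝ :=
  fun x => if h : (x : ℕ) < d then θ ⟨x, h⟩ else 1 - ∑ i, θ i

lemma covf_centered {X : Type*} [Fintype X] (q B T : X → ℝ) (hq1 : ∑ x, q x = 1) :
    ∑ x, q x * ((B x - expct q B) * (T x - expct q T)) = covf q B T := by
  have h : ∀ x ∈ Finset.univ, q x * ((B x - expct q B) * (T x - expct q T))
      = q x * B x * T x - expct q T * (q x * B x) - expct q B * (q x * T x)
        + (expct q B * expct q T) * q x := fun x _ => by ring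
  rw [Finset.sum_congr rfl h]
  simp only [Finset.sum_add_distrib, Finset.sum_sub_distrib, ← Finset.mul_sum, hq1, covf, expct]
  ring

lemma covf_comm {X : Type*} [Fintype X] (q A B : X → ℝ) : covf q A B = covf q B A := by
  have h : ∀ x ∈ Finset.univ, q x * A x * B x = q x * B x * A x := fun x _ => by ring
  unfold covf
  rw [Finset.sum_congr rfl h, mul_comm]

lemma covf_sum_right {X : Type*} [Fintype X] {n : ℕ} (q B : X → ℝ) (u : Fin n → ℝ)
    (s : Fin n → X → ℝ) :
    covf q B (fun x => ∑ i, u i * s i x) = ∑ i, u i * covf q B (s i) := by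
  unfold covf
  have h1 : ∑ x, q x * B x * (∑ i, u i * s i x) = ∑ i, u i * ∑ x, q x * B x * s i x := by
    simp_rw [Finset.mul_sum]
    rw [Finset.sum_comm]
    exact Finset.sum_congr rfl fun i _ => Finset.sum_congr rfl fun x _ => by ring
  have h2 : ∑ x, q x * (∑ i, u i * s i x) = ∑ i, u i * ∑ x, q x * s i x := by
    simp_rw [Finset.mul_sum]
    rw [Finset.sum_comm]
    exact Finset.sum_congr rfl fun i _ => Finset.sum_congr rfl fun x _ => by ring
  rw [h1, h2, Finset.mul_sum, ← Finset.sum_sub_distrib]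
  exact Finset.sum_congr rfl fun i _ => by ring

lemma covf_sq_le {X : Type*} [Fintype X] (q B T : X → ℝ) (hq : ∀ x, 0 ≤ q x)
    (hq1 : ∑ x, q x = 1) : (covf q B T)^2 ≤ varE q B * covf q T T := by
  have h1 : covf q B T = ∑ x, (Real.sqrt (q x) * (B x - expct q B))
      * (Real.sqrt (q x) * (T x - expct q T)) := by
    rw [← covf_centered q B T hq1]
    refine Finset.sum_congr rfl fun x _ => ?_
    have hx := Real.mul_self_sqrt (hq x)
    calc q x * ((B x - expct q B) * (T x - expct q T))
        = (Real.sqrt (q x) * Real.sqrt (q x)) * ((B x - expct q B) * (T x - expct q T)) := by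
          rw [hx]
      _ = _ := by ring
  have h2 : varE q B = ∑ x, (Real.sqrt (q x) * (B x - expct q B))^2 := by
    unfold varE
    refine Finset.sum_congr rfl fun x _ => ?_
    rw [mul_pow, Real.sq_sqrt (hq x)]
  have h3 : covf q T T = ∑ x, (Real.sqrt (q x) * (T x - expct q T))^2 := by
    rw [← covf_centered q T T hq1]
    refine Finset.sum_congr rfl fun x _ => ?_
    have hx := Real.mul_self_sqrt (hq x)
    calc q x * ((T x - expct q T) * (T x - expct q T))
        = (Real.sqrt (q x) * Real.sqrt (q x)) * ((T x - expct q T) * (T x - expct q T)) := by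
          rw [hx]
      _ = _ := by ring
  rw [h1, h2, h3]
  exact Finset.sum_mul_sq_le_sq_mul_sq _ _ _

/-- for a submanifold, the variance of the α-representation dominates
the squared norm of the differential of `θ ↦ E_{p_θ}[A]`. -/
theorem variance_ge_norm_differential {X : Type*} [Fintype X] {n : ℕ}
    (Θ : Set (Fin n → ℝ)) (hΘ : IsOpen Θ)
    (p : (Fin n → ℝ) → X → ℝ)
    (hsmooth : ∀ x, ContDiffOn ℝ 1 (fun θ => p θ x) Θ)
    (hpos : ∀ θ ∈ Θ, ∀ x, 0 < p θ x)
    (hsum : ∀ θ ∈ Θ, ∑ x, p θ x = 1)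
    (α : ℝ) (hα : 0 < α)
    (hG : ∀ θ ∈ Θ, (Galpha α p θ).PosDef) :
    ∀ A : X → ℝ, ∀ θ ∈ Θ,
      varE (escort α (p θ))
          (fun x => (p θ x / escort α (p θ) x) * (A x - expct (p θ) A))
        ≥ (fun i => pderiv i (fun t => expct (p t) A) θ) ⬝ᵥ
            ((Galpha α p θ)⁻¹).mulVec
              (fun i => pderiv i (fun t => expct (p t) A) θ) := by
  intro A θ hθ
  classical
  -- basic positivity facts
  have hpθ : ∀ x, 0 < p θ x := hpos θ hθ
  have hZ : 0 < ∑ y, p θ y ^ α :=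
    by
    have hne : Nonempty X := by
      rcases isEmpty_or_nonempty X with h | h
      · have := hsum θ hθ
        simp at this
      · exact h
    exact Finset.sum_pos (fun y _ => Real.rpow_pos_of_pos (hpθ y) α) Finset.univ_nonempty
  have hqpos : ∀ x, 0 < escort α (p θ) x := fun x =>
    div_pos (Real.rpow_pos_of_pos (hpθ x) α) hZ
  have hq1 : ∑ x, escort α (p θ) x = 1 := by
    simp only [escort]
    rw [← Finset.sum_div, div_self hZ.ne']
  set q : X → ℝ := escort α (p θ) with hqdef
  -- differentiability
  have hdiff : ∀ x, DifferentiableAt ℝ (fun t => p t x) θ := fun x =>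
    (((hsmooth x).contDiffAt (hΘ.mem_nhds hθ)).differentiableAt one_ne_zero)
  set D : Fin n → X → ℝ := fun i x => fderiv ℝ (fun t => p t x) θ (Pi.single i 1) with hDdef
  set s : Fin n → X → ℝ := fun i x => pderiv i (fun t => Real.log (p t x)) θ with hsdef
  have hs_eq : ∀ i x, p θ x * s i x = D i x := by
    intro i x
    have hlog : HasFDerivAt (fun t => Real.log (p t x))
        ((p θ x)⁻¹ • fderiv ℝ (fun t => p t x) θ) θ :=
      ((hdiff x).hasFDerivAt).log (hpθ x).ne'
    have : s i x = (p θ x)⁻¹ * D i x := by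
      simp only [hsdef, pderiv, hlog.fderiv, ContinuousLinearMap.smul_apply, smul_eq_mul, hDdef]
    rw [this]
    field_simp
    rw [mul_comm, mul_div_assoc, div_self (hpθ x).ne', mul_one]
  -- sum of derivatives is zero
  have hDsum : ∀ i, ∑ x, D i x = 0 := by
    intro i
    have hg : HasFDerivAt (fun t => ∑ x, p t x)
        (∑ x, fderiv ℝ (fun t => p t x) θ) θ :=
      HasFDerivAt.fun_sum (fun x _ => (hdiff x).hasFDerivAt)
    have heq : (fun t => ∑ x, p t x) =ᶠ[nhds θ] fun _ => (1 : ℝ) :=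
      Filter.eventuallyEq_of_mem (hΘ.mem_nhds hθ) (fun t ht => hsum t ht)
    have hfd : fderiv ℝ (fun t => ∑ x, p t x) θ = 0 := by
      rw [heq.fderiv_eq]
      exact fderiv_const_apply 1
    have : (∑ x, fderiv ℝ (fun t => p t x) θ) = 0 := by
      rw [← hg.fderiv, hfd]
    calc ∑ x, D i x = (∑ x, fderiv ℝ (fun t => p t x) θ) (Pi.single i 1) := by
          rw [ContinuousLinearMap.sum_apply]
      _ = 0 := by rw [this]; rfl
  -- gradient of the mean
  set v : Fin n → ℝ := fun i => pderiv i (fun t => expct (p t) A) θ with hvdef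
  have hv : ∀ i, v i = ∑ x, D i x * A x := by
    intro i
    have hg : HasFDerivAt (fun t => ∑ x, p t x * A x)
        (∑ x, A x • fderiv ℝ (fun t => p t x) θ) θ :=
      HasFDerivAt.fun_sum (fun x _ => by
        simpa [smul_smul] using ((hdiff x).hasFDerivAt).mul_const (A x))
    have : v i = (∑ x, A x • fderiv ℝ (fun t => p t x) θ) (Pi.single i 1) := by
      simp only [hvdef, pderiv, expct]
      rw [hg.fderiv]
    rw [this, ContinuousLinearMap.sum_apply]
    exact Finset.sum_congr rfl fun x _ => by
      simp [hDdef, mul_comm]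
  -- the function B
  set EA : ℝ := expct (p θ) A with hEAdef
  set B : X → ℝ := fun x => (p θ x / q x) * (A x - EA) with hBdef
  have hqB : ∀ x, q x * B x = p θ x * (A x - EA) := by
    intro x
    simp only [hBdef]
    field_simp
    rw [mul_assoc]
    exact mul_div_cancel_left₀ _ (hqpos x).ne'
  have hEB : ∑ x, q x * B x = 0 := by
    rw [Finset.sum_congr rfl fun x _ => hqB x]
    have : ∑ x, p θ x * (A x - EA) = (∑ x, p θ x * A x) - EA * ∑ x, p θ x := by
      rw [Finset.mul_sum, ← Finset.sum_sub_distrib]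
      exact Finset.sum_congr rfl fun x _ => by ring
    rw [this, hsum θ hθ]
    simp [hEAdef, expct]
  -- covariance of B with scores gives the gradient
  have hqBs : ∀ i, ∑ x, q x * B x * s i x = v i := by
    intro i
    have h1 : ∀ x ∈ Finset.univ, q x * B x * s i x = (A x - EA) * D i x := by
      intro x _
      calc q x * B x * s i x = (q x * B x) * s i x := by ring
        _ = (p θ x * (A x - EA)) * s i x := by rw [hqB x]
        _ = (A x - EA) * (p θ x * s i x) := by ring
        _ = (A x - EA) * D i x := by rw [hs_eq i x]
    rw [Finset.sum_congr rfl h1]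
    have : ∑ x, (A x - EA) * D i x = (∑ x, D i x * A x) - EA * ∑ x, D i x := by
      rw [Finset.mul_sum, ← Finset.sum_sub_distrib]
      exact Finset.sum_congr rfl fun x _ => by ring
    rw [this, hDsum i, hv i]
    ring
  have hcovBs : ∀ i, covf q B (s i) = v i := by
    intro i
    unfold covf
    rw [hqBs i, hEB]
    ring
  -- matrix setup
  set G : Matrix (Fin n) (Fin n) ℝ := Galpha α p θ with hGdef
  have hGpd : G.PosDef := hG θ hθ
  have hGij : ∀ i j, G i j = covf q (s i) (s j) := fun i j => rfl
  set u : Fin n → ℝ := G⁻¹.mulVec v with hudef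
  set T : X → ℝ := fun x => ∑ i, u i * s i x with hTdef
  have hcovBT : covf q B T = u ⬝ᵥ v := by
    rw [hTdef, covf_sum_right q B u s]
    exact Finset.sum_congr rfl fun i _ => by rw [hcovBs i]
  have hGmul : G.mulVec u = v := by
    rw [hudef, Matrix.mulVec_mulVec, Matrix.mul_nonsing_inv G (isUnit_iff_ne_zero.2 hGpd.det_pos.ne')]
    simp
  have hcovTT : covf q T T = u ⬝ᵥ v := by
    have h1 : covf q T T = ∑ i, u i * covf q T (s i) := by
      have := covf_sum_right q T u s
      rw [hTdef]
      exact this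
    have h2 : ∀ i, covf q T (s i) = ∑ j, u j * covf q (s i) (s j) := by
      intro i
      rw [covf_comm]
      exact covf_sum_right q (s i) u s
    rw [h1]
    have h3 : ∑ i, u i * covf q T (s i) = ∑ i, u i * (G.mulVec u) i := by
      refine Finset.sum_congr rfl fun i _ => ?_
      rw [h2 i]
      congr 1
      simp only [Matrix.mulVec, dotProduct]
      refine Finset.sum_congr rfl fun j _ => ?_
      rw [hGij i j]
      ring
    rw [h3, hGmul]
    rfl
  -- nonnegativity
  set r : ℝ := u ⬝ᵥ v with hrdef
  have hrv : v ⬝ᵥ G⁻¹.mulVec v = r := by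
    rw [hrdef, hudef, dotProduct_comm]
  have hr0 : 0 ≤ r := by
    rw [← hrv]
    rcases eq_or_ne v 0 with hv0 | hv0
    · simp [hv0]
    · exact le_of_lt (by simpa using hGpd.inv.dotProduct_mulVec_pos hv0)
  have hVar0 : 0 ≤ varE q B :=
    Finset.sum_nonneg fun x _ => mul_nonneg (hqpos x).le (sq_nonneg _)
  have hCS : r ^ 2 ≤ varE q B * r := by
    have := covf_sq_le q B T (fun x => (hqpos x).le) hq1
    rwa [hcovBT, hcovTT] at this
  have hfinal : r ≤ varE q B := by
    rcases hr0.eq_or_lt with h | h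
    · rw [← h]; exact hVar0
    · nlinarith
  calc (fun i => pderiv i (fun t => expct (p t) A) θ) ⬝ᵥ (G⁻¹).mulVec
        (fun i => pderiv i (fun t => expct (p t) A) θ) = r := hrv
    _ ≤ varE q B := hfinal
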